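/- Let m, n ∈ ℕ, let λ₁, …, λ_m > 0 be real, and let φ_{j,ℓ} be real numbers with 0 < φ_{j,ℓ} < π/2 for all 1 ≤ j ≤ n, 1 ≤ ℓ ≤ m. Then the real symmetric n×n matrix whose (j,k) entry is ∏_{ℓ=1}^{m} (sin(φ_{j,ℓ} + φ_{k,ℓ}))^{−λ_ℓ} is positive semidefinite. -/

import Mathlib

open MeasureTheory Set Real

private lemma integrable_aux {s b : ℝ} (hs : -1 < s) (hb : 0 < b) :
    IntegrableOn (fun t : ℝ => t ^ s * Real.exp (-(b * t))) (Ioi 0) := by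
  refine (integrableOn_rpow_mul_exp_neg_mul_rpow hs one_pos hb).congr_fun
    (fun t ht => ?_) measurableSet_Ioi
  beta_reduce
  rw [Real.rpow_one, neg_mul]

private lemma qf_aux (n : ℕ) : ∀ (m : ℕ) (lam : Fin m → ℝ), (∀ l, 0 < lam l) →
    ∀ (x : Fin n → Fin m → ℝ), (∀ j l, 0 < x j l) → ∀ c : Fin n → ℝ,
      0 ≤ ∑ j : Fin n, ∑ k : Fin n,
        (∏ l : Fin m, (x j l + x k l) ^ (-(lam l))) * c j * c k := by
  intro m
  induction m with
  | zero =>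
    intro lam _ x _ c
    simp only [Finset.univ_eq_empty, Finset.prod_empty, one_mul]
    rw [← Finset.sum_mul_sum]
    exact mul_self_nonneg _
  | succ m ih =>
    intro lam hlam x hx c
    have hLpos : 0 < lam (Fin.last m) := hlam _
    set L := lam (Fin.last m) with hLdef
    set y : Fin n → ℝ := fun j => x j (Fin.last m) with hy
    have hypos : ∀ j, 0 < y j := fun j => hx j _
    have hb : ∀ j k : Fin n, (0:ℝ) < y j + y k := fun j k => add_pos (hypos j) (hypos k)
    have G0 : (0:ℝ) < Real.Gamma L := Real.Gamma_pos_of_pos hLpos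
    set A : Fin n → Fin n → ℝ := fun j k =>
      ∏ l : Fin m, (x j l.castSucc + x k l.castSucc) ^ (-(lam l.castSucc)) with hA
    have Hint : ∀ j k : Fin n, Integrable
        (fun t : ℝ => A j k * (t ^ (L - 1) * Real.exp (-((y j + y k) * t))) * c j * c k)
        (volume.restrict (Ioi 0)) := by
      intro j k
      exact (((integrable_aux (by linarith) (hb j k)).const_mul (A j k)).mul_const
        (c j)).mul_const (c k)
    have key : ∀ j k : Fin n, (∏ l : Fin (m+1), (x j l + x k l) ^ (-(lam l))) * c j * c k
        = (Real.Gamma L)⁻¹ *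
          ∫ t in Ioi (0:ℝ), A j k * (t ^ (L - 1) * Real.exp (-((y j + y k) * t))) * c j * c k := by
      intro j k
      rw [integral_mul_const, integral_mul_const, integral_const_mul,
        integral_rpow_mul_exp_neg_mul_Ioi hLpos (hb j k), Fin.prod_univ_castSucc,
        one_div, Real.inv_rpow (hb j k).le, ← Real.rpow_neg (hb j k).le]
      rw [hA]
      field_simp
      ring
    calc ∑ j : Fin n, ∑ k : Fin n,
          (∏ l : Fin (m+1), (x j l + x k l) ^ (-(lam l))) * c j * c k
        = ∑ j : Fin n, ∑ k : Fin n, (Real.Gamma L)⁻¹ *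
            ∫ t in Ioi (0:ℝ), A j k * (t ^ (L - 1) * Real.exp (-((y j + y k) * t))) * c j * c k :=
          Finset.sum_congr rfl fun j _ => Finset.sum_congr rfl fun k _ => key j k
      _ = (Real.Gamma L)⁻¹ * ∫ t in Ioi (0:ℝ), ∑ j : Fin n, ∑ k : Fin n,
            A j k * (t ^ (L - 1) * Real.exp (-((y j + y k) * t))) * c j * c k := by
          rw [integral_finset_sum _ (fun j _ => integrable_finset_sum _ (fun k _ => Hint j k)),
            Finset.mul_sum]
          refine Finset.sum_congr rfl fun j _ => ?_
          rw [integral_finset_sum _ (fun k _ => Hint j k), Finset.mul_sum]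
      _ ≥ 0 := by
          refine mul_nonneg (inv_nonneg.mpr G0.le) (setIntegral_nonneg measurableSet_Ioi ?_)
          intro t ht
          have ht0 : (0:ℝ) < t := ht
          have hrw : ∀ j k : Fin n,
              A j k * (t ^ (L - 1) * Real.exp (-((y j + y k) * t))) * c j * c k
              = A j k * (c j * t ^ ((L - 1)/2) * Real.exp (-(y j * t)))
                * (c k * t ^ ((L - 1)/2) * Real.exp (-(y k * t))) := by
            intro j k
            have h1 : t ^ ((L - 1)/2) * t ^ ((L - 1)/2) = t ^ (L - 1) := by
              rw [← Real.rpow_add ht0]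
              norm_num
            have h2 : Real.exp (-(y j * t)) * Real.exp (-(y k * t))
                = Real.exp (-((y j + y k) * t)) := by
              rw [← Real.exp_add]
              ring_nf
            rw [← h1, ← h2]
            ring
          calc (0:ℝ) ≤ ∑ j : Fin n, ∑ k : Fin n,
                (∏ l : Fin m, ((fun j l => x j l.castSucc) j l + (fun j l => x j l.castSucc) k l)
                  ^ (-(lam l.castSucc)))
                * (c j * t ^ ((L - 1)/2) * Real.exp (-(y j * t)))
                * (c k * t ^ ((L - 1)/2) * Real.exp (-(y k * t))) :=
              ih (fun l => lam l.castSucc) (fun l => hlam _) (fun j l => x j l.castSucc)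
                (fun j l => hx j _) (fun j => c j * t ^ ((L - 1)/2) * Real.exp (-(y j * t)))
            _ = ∑ j : Fin n, ∑ k : Fin n,
                A j k * (t ^ (L - 1) * Real.exp (-((y j + y k) * t))) * c j * c k := by
              refine Finset.sum_congr rfl fun j _ => Finset.sum_congr rfl fun k _ => ?_
              rw [hrw j k, hA]

/-- For real `λ₁, …, λ_m > 0` and real `φ_{j,ℓ}` with `0 < φ_{j,ℓ} < π/2`, the real symmetric
matrix with `(j,k)` entry `∏_{ℓ=1}^m (sin(φ_{j,ℓ} + φ_{k,ℓ}))^{-λ_ℓ}` is positive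
semidefinite. -/
theorem inv_sin_pow_product_matrix_posSemidef (m n : ℕ) (lam : Fin m → ℝ)
    (hlam : ∀ l, 0 < lam l) (φ : Fin n → Fin m → ℝ)
    (hφ0 : ∀ j l, 0 < φ j l) (hφ1 : ∀ j l, φ j l < Real.pi / 2) :
    ∀ c : Fin n → ℝ,
      0 ≤ ∑ j : Fin n, ∑ k : Fin n,
        (∏ l : Fin m, Real.sin (φ j l + φ k l) ^ (-(lam l))) * c j * c k := by
  intro c
  have hcos : ∀ j l, 0 < Real.cos (φ j l) := by
    intro j l
    exact Real.cos_pos_of_mem_Ioo ⟨by linarith [hφ0 j l, Real.pi_pos], hφ1 j l⟩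
  have htan : ∀ j l, 0 < Real.tan (φ j l) :=
    fun j l => Real.tan_pos_of_pos_of_lt_pi_div_two (hφ0 j l) (hφ1 j l)
  have hdecomp : ∀ j k l, Real.sin (φ j l + φ k l) ^ (-(lam l))
      = Real.cos (φ j l) ^ (-(lam l)) * Real.cos (φ k l) ^ (-(lam l))
        * (Real.tan (φ j l) + Real.tan (φ k l)) ^ (-(lam l)) := by
    intro j k l
    have h1 : Real.sin (φ j l + φ k l)
        = Real.cos (φ j l) * Real.cos (φ k l) * (Real.tan (φ j l) + Real.tan (φ k l)) := by
      rw [Real.sin_add, Real.tan_eq_sin_div_cos, Real.tan_eq_sin_div_cos]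
      field_simp [(hcos j l).ne', (hcos k l).ne']
    rw [h1, Real.mul_rpow (mul_nonneg (hcos j l).le (hcos k l).le)
      (add_pos (htan j l) (htan k l)).le, Real.mul_rpow (hcos j l).le (hcos k l).le]
  have main := qf_aux n m lam hlam (fun j l => Real.tan (φ j l)) (fun j l => htan j l)
    (fun j => (∏ l, Real.cos (φ j l) ^ (-(lam l))) * c j)
  refine le_trans main (le_of_eq ?_)
  refine Finset.sum_congr rfl fun j _ => Finset.sum_congr rfl fun k _ => ?_
  have hp : ∏ l, Real.sin (φ j l + φ k l) ^ (-(lam l))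
      = (∏ l, Real.cos (φ j l) ^ (-(lam l))) * (∏ l, Real.cos (φ k l) ^ (-(lam l)))
        * ∏ l, (Real.tan (φ j l) + Real.tan (φ k l)) ^ (-(lam l)) := by
    rw [Finset.prod_congr rfl fun l _ => hdecomp j k l, ← Finset.prod_mul_distrib,
      ← Finset.prod_mul_distrib]
  rw [hp]
  ring
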